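/- arXiv:1901.01797 — 4 statements merged into one kernel-verified Lean document; each statement's English description precedes it below -/
import Mathlib

section
/- Let G be a chordal ordered graph, let v be the smallest vertex of G, let r ≥ 0 be an integer, let C be the vertex set of a connected component of G − N_r[v], and let K be the set of vertices in N_r[v] that have a neighbor in C. Then K induces a clique in G, and every vertex of K is smaller than every vertex of C. -/
/-- A layering of a simple graph: adjacent vertices differ by at most 1. -/
def IsLayering {V : Type*} (G : SimpleGraph V) (lam : V → ℤ) : Prop :=
  ∀ ⦃u v : V⦄, G.Adj u v → |lam u - lam v| ≤ 1

/-- The spanning subgraph of `G` keeping only the edges with both ends in `U`.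
Reachability and distances between vertices of `U` in this graph coincide with those
in the induced subgraph `G[U]`. -/
def restrictSet {V : Type*} (G : SimpleGraph V) (U : Set V) : SimpleGraph V where
  Adj u v := G.Adj u v ∧ u ∈ U ∧ v ∈ U
  symm := ⟨fun _ _ ⟨h, hu, hv⟩ => ⟨h.symm, hv, hu⟩⟩
  loopless := ⟨fun u ⟨h, _, _⟩ => G.irrefl h⟩

/-- `C` is the vertex set of a connected component of `G − B`. -/
def IsComponentOf {V : Type*} (G : SimpleGraph V) (B C : Set V) : Prop :=
  ∃ x, x ∉ B ∧ C = {y | (restrictSet G Bᶜ).Reachable x y}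

/-- A graph with an ordered vertex set is chordal (as an ordered graph) if for every
vertex `v` the neighbors of `v` smaller than `v` induce a clique. -/
def ChordalOrdered {V : Type*} [LinearOrder V] (G : SimpleGraph V) : Prop :=
  ∀ ⦃v u w : V⦄, G.Adj v u → G.Adj v w → u < v → w < v → u ≠ w → G.Adj u w

/-- The closed ball `N_r[v]`: vertices at distance at most `r` from `v`. -/
def closedBall {V : Type*} (G : SimpleGraph V) (v : V) (r : ℕ) : Set V :=
  {u | G.Reachable v u ∧ G.dist v u ≤ r}

open SimpleGraph

/-- Max-removal lemma: any walk can be replaced by a walk (within the same vertex set)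
all of whose vertices are `≤` one of the two endpoints. -/
lemma ChordalOrdered.exists_low_walk {V : Type*} [LinearOrder V] {G : SimpleGraph V}
    (hG : ChordalOrdered G) :
    ∀ (n : ℕ) {a b : V} (p : G.Walk a b), p.length ≤ n →
      ∃ q : G.Walk a b, q.length ≤ p.length ∧ (∀ z ∈ q.support, z ∈ p.support) ∧
        (∀ z ∈ q.support, z ≤ a ∨ z ≤ b) := by
  intro n
  induction n with
  | zero =>
    intro a b p hp
    cases p with
    | nil => exact ⟨.nil, le_rfl, fun z hz => hz, fun z hz => by simp at hz; simp [hz]⟩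
    | cons h p' => simp [Walk.length_cons] at hp
  | succ n ih =>
    intro a b p hp
    cases p with
    | nil => exact ⟨.nil, le_rfl, fun z hz => hz, fun z hz => by simp at hz; simp [hz]⟩
    | @cons _ c _ h p' =>
      have hp' : p'.length ≤ n := by simpa [Walk.length_cons] using hp
      obtain ⟨q', hq'len, hq'sub, hq'bd⟩ := ih p' hp'
      by_cases hca : c ≤ a ∨ c ≤ b
      · refine ⟨.cons h q', by simpa [Walk.length_cons] using Nat.succ_le_succ hq'len,
          ?_, ?_⟩
        · intro z hz
          rw [Walk.support_cons, List.mem_cons] at hz ⊢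
          exact hz.imp id (fun hz => hq'sub z hz)
        · intro z hz
          rw [Walk.support_cons, List.mem_cons] at hz
          rcases hz with rfl | hz
          · exact Or.inl le_rfl
          · rcases hq'bd z hz with h1 | h1
            · rcases hca with h2 | h2
              · exact Or.inl (h1.trans h2)
              · exact Or.inr (h1.trans h2)
            · exact Or.inr h1
      · push_neg at hca
        obtain ⟨hac, hbc⟩ := hca
        cases q' with
        | nil => exact absurd rfl hbc.ne'
        | @cons _ w _ h2 q'' =>
          have hw : w < c := by
            rcases hq'bd w (by simp [Walk.support_cons]) with h1 | h1
            · exact lt_of_le_of_ne h1 h2.ne'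
            · exact h1.trans_lt hbc
          have hsub'' : ∀ z ∈ q''.support, z ∈ (Walk.cons h p').support := by
            intro z hz
            have : z ∈ (Walk.cons h2 q'').support := by simp [Walk.support_cons, hz]
            have := hq'sub z this
            simp [Walk.support_cons, this]
          by_cases hwa : w = a
          · subst hwa
            have hlen'' : q''.length ≤ n := by
              have : q''.length + 1 ≤ p'.length := by
                simpa [Walk.length_cons] using hq'len
              omega
            obtain ⟨q, hqlen, hqsub, hqbd⟩ := ih q'' hlen''
            refine ⟨q, ?_, fun z hz => hsub'' z (hqsub z hz), hqbd⟩
            have : q''.length + 1 ≤ p'.length := by simpa [Walk.length_cons] using hq'len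
            simp [Walk.length_cons]; omega
          · have haw : G.Adj a w := hG h.symm (h2 : G.Adj c w) hac hw (Ne.symm hwa)
            have hlenr : (Walk.cons haw q'').length ≤ n := by
              have : q''.length + 1 ≤ p'.length := by simpa [Walk.length_cons] using hq'len
              simp [Walk.length_cons]; omega
            obtain ⟨q, hqlen, hqsub, hqbd⟩ := ih (Walk.cons haw q'') hlenr
            refine ⟨q, ?_, ?_, hqbd⟩
            · simp [Walk.length_cons] at hqlen ⊢
              have : q''.length + 1 ≤ p'.length := by simpa [Walk.length_cons] using hq'len
              omega
            · intro z hz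
              have := hqsub z hz
              rw [Walk.support_cons, List.mem_cons] at this
              rcases this with rfl | hz'
              · simp [Walk.support_cons]
              · exact hsub'' z hz'

/-- If `a` and `b` are reachable then `dist v b ≤ dist v a + 1` whenever `a ~ b`. -/
lemma dist_adj_le_aux {V : Type*} {G : SimpleGraph V} {v a b : V}
    (hr : G.Reachable v a) (h : G.Adj a b) : G.dist v b ≤ G.dist v a + 1 := by
  obtain ⟨p, hp⟩ := hr.exists_walk_length_eq_dist
  have := SimpleGraph.dist_le (p.concat h)
  rwa [Walk.length_concat, hp] at this

/-- Descent lemma: every vertex at positive distance from the minimum vertex `v`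
has a smaller neighbor one step closer to `v`. -/
lemma ChordalOrdered.exists_smaller_closer {V : Type*} [LinearOrder V] {G : SimpleGraph V}
    (hG : ChordalOrdered G) {v : V} (hv : ∀ u, v ≤ u) :
    ∀ (d : ℕ) {x : V}, G.Reachable v x → G.dist v x = d → 0 < d →
      ∃ w, G.Adj x w ∧ w < x ∧ G.dist v w + 1 = d := by
  intro d
  induction d using Nat.strong_induction_on with
  | _ d ih =>
    intro x hreach hdist hd
    obtain ⟨p, hp⟩ := hreach.exists_walk_length_eq_dist
    rw [hdist] at hp
    cases hq : p.reverse with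
    | nil =>
      exfalso
      have := congrArg Walk.length hq
      simp [Walk.length_reverse, hp] at this
      omega
    | @cons _ w₀ _ h q =>
      have hlen : q.length + 1 = d := by
        have := congrArg Walk.length hq
        simpa [Walk.length_reverse, hp, Walk.length_cons] using this.symm
      have hreachw₀ : G.Reachable v w₀ := q.reverse.reachable
      have hdw₀ : G.dist v w₀ = d - 1 := by
        have h1 : G.dist v w₀ ≤ q.length := by
          have := SimpleGraph.dist_le q.reverse
          rwa [Walk.length_reverse] at this
        have h2 : d ≤ G.dist v w₀ + 1 := hdist ▸ dist_adj_le_aux hreachw₀ h.symm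
        omega
      have hwx : w₀ < x := by
        by_contra hle
        push_neg at hle
        have hxw : x < w₀ := lt_of_le_of_ne hle h.ne
        by_cases hd1 : d = 1
        · have h0 : G.dist v w₀ = 0 := by omega
          obtain ⟨p', hp'⟩ := hreachw₀.exists_walk_length_eq_dist
          rw [h0] at hp'
          have : v = w₀ := Walk.eq_of_length_eq_zero hp'
          exact absurd (this ▸ hxw) (not_lt.mpr (hv x))
        · obtain ⟨w, hadj, hwlt, hwd⟩ := ih (d - 1) (by omega) hreachw₀ hdw₀ (by omega)
          have hwne : x ≠ w := by
            intro hxe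
            rw [← hxe] at hwd
            omega
          have hxw' : G.Adj x w := hG h.symm hadj hxw hwlt hwne
          have hreachw : G.Reachable v w := hreachw₀.trans hadj.reachable
          have := dist_adj_le_aux hreachw hxw'.symm
          rw [hdist] at this
          omega
      exact ⟨w₀, h, hwx, by omega⟩

/-- A walk in the restriction of `G` to `U` starting in `U` yields a `G`-walk
all of whose vertices lie in `U` and are reachable from the start in the restriction. -/
lemma restrict_walk_support {V : Type*} {G : SimpleGraph V} {U : Set V} :
    ∀ {a b : V} (p : (restrictSet G U).Walk a b), a ∈ U →
      ∃ q : G.Walk a b, ∀ z ∈ q.support, z ∈ U ∧ (restrictSet G U).Reachable a z := by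
  intro a b p
  induction p with
  | nil =>
    intro ha
    refine ⟨.nil, fun z hz => ?_⟩
    simp only [Walk.support_nil, List.mem_singleton] at hz
    subst hz
    exact ⟨ha, .refl z⟩
  | @cons u c w h p ih =>
    intro ha
    obtain ⟨hadj, hu, hc⟩ := h
    obtain ⟨q, hq⟩ := ih hc
    refine ⟨.cons hadj q, fun z hz => ?_⟩
    rw [Walk.support_cons, List.mem_cons] at hz
    rcases hz with rfl | hz
    · exact ⟨ha, .refl z⟩
    · obtain ⟨h1, h2⟩ := hq z hz
      exact ⟨h1, (show (restrictSet G U).Adj u c from ⟨hadj, hu, hc⟩).reachable.trans h2⟩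

/-- Let `G` be a chordal ordered graph, `v` its smallest vertex, `r ≥ 0`, `C` the vertex
set of a connected component of `G − N_r[v]` and `K` the set of vertices of `N_r[v]`
with a neighbor in `C`. Then `K` induces a clique and every vertex of `K` is smaller
than every vertex of `C`. -/
theorem stmt_6 {V : Type*} [Fintype V] [LinearOrder V] (G : SimpleGraph V)
    (hG : ChordalOrdered G) (v : V) (hv : ∀ u, v ≤ u) (r : ℕ)
    (C : Set V) (hC : IsComponentOf G (closedBall G v r) C)
    (K : Set V) (hK : K = {u ∈ closedBall G v r | ∃ c ∈ C, G.Adj u c}) :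
    (∀ x ∈ K, ∀ y ∈ K, x ≠ y → G.Adj x y) ∧ (∀ x ∈ K, ∀ c ∈ C, x < c) := by
  obtain ⟨x₀, hx₀, hCeq⟩ := hC
  set B : Set V := closedBall G v r with hB
  have hmemC : ∀ {c : V}, c ∈ C ↔ (restrictSet G Bᶜ).Reachable x₀ c := by
    intro c; rw [hCeq]; exact Iff.rfl
  -- any two vertices of C are joined by a G-walk whose vertices lie in C (and in Bᶜ)
  have hwalkC : ∀ {c c' : V}, c ∈ C → c' ∈ C →
      ∃ q : G.Walk c c', ∀ z ∈ q.support, z ∈ C ∧ z ∈ Bᶜ := by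
    intro c c' hc hc'
    have hr : (restrictSet G Bᶜ).Reachable c c' :=
      (hmemC.mp hc).symm.trans (hmemC.mp hc')
    obtain ⟨p⟩ := hr
    have hcB : c ∈ Bᶜ := by
      obtain ⟨p₀⟩ := hmemC.mp hc
      obtain ⟨q₀, hq₀⟩ := restrict_walk_support p₀ hx₀
      exact (hq₀ c q₀.end_mem_support).1
    obtain ⟨q, hq⟩ := restrict_walk_support p hcB
    refine ⟨q, fun z hz => ?_⟩
    obtain ⟨h1, h2⟩ := hq z hz
    exact ⟨hmemC.mpr ((hmemC.mp hc).trans h2), h1⟩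
  -- main claim (ii)
  have claim2 : ∀ x ∈ K, ∀ c ∈ C, x < c := by
    intro x hx c hc
    rw [hK] at hx
    obtain ⟨hxB, c', hc', hxc'⟩ := hx
    by_contra hle
    push_neg at hle
    have hcB : c ∈ Bᶜ := by
      obtain ⟨q, hq⟩ := hwalkC hc hc
      exact (hq c q.end_mem_support).2
    have hcx : c < x := lt_of_le_of_ne hle (by rintro rfl; exact hcB hxB)
    obtain ⟨q₀, hq₀⟩ := hwalkC hc' hc
    set p : G.Walk x c := Walk.cons hxc' q₀ with hp
    obtain ⟨q, _, hsub, hbd⟩ := hG.exists_low_walk p.length p le_rfl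
    cases q with
    | nil => exact hcB hxB
    | @cons _ y _ h1 q1 =>
      have hymem : y ∈ (Walk.cons h1 q1).support := by simp [Walk.support_cons]
      have hyx : y < x := by
        rcases hbd y hymem with h2 | h2
        · exact lt_of_le_of_ne h2 h1.ne'
        · exact h2.trans_lt hcx
      have hyB : y ∈ Bᶜ := by
        have := hsub y hymem
        rw [hp, Walk.support_cons, List.mem_cons] at this
        rcases this with rfl | hz
        · exact absurd rfl hyx.ne
        · exact (hq₀ y hz).2
      obtain ⟨hreachx, hdistx⟩ := hxB
      have hreachy : G.Reachable v y := hreachx.trans h1.reachable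
      have hdisty : r < G.dist v y := by
        by_contra hge
        push_neg at hge
        exact hyB ⟨hreachy, hge⟩
      by_cases hd0 : G.dist v x = 0
      · obtain ⟨p', hp'⟩ := hreachx.exists_walk_length_eq_dist
        rw [hd0] at hp'
        have : v = x := Walk.eq_of_length_eq_zero hp'
        exact absurd (this ▸ hyx) (not_lt.mpr (hv y))
      · obtain ⟨w, hadjw, hwx, hwd⟩ :=
          hG.exists_smaller_closer hv (G.dist v x) hreachx rfl (Nat.pos_of_ne_zero hd0)
        have hwy : w ≠ y := by
          rintro rfl
          omega
        have hwyadj : G.Adj w y := hG hadjw h1 hwx hyx hwy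
        have hreachw : G.Reachable v w := hreachx.trans hadjw.reachable
        have := dist_adj_le_aux hreachw hwyadj
        omega
  refine ⟨?_, claim2⟩
  -- claim (i): K is a clique
  intro x hx y hy hxy
  have hx' := hx
  have hy' := hy
  rw [hK] at hx' hy'
  obtain ⟨hxB, cx, hcx, hxcx⟩ := hx'
  obtain ⟨hyB, cy, hcy, hycy⟩ := hy'
  obtain ⟨q₀, hq₀⟩ := hwalkC hcx hcy
  set p : G.Walk x y := Walk.cons hxcx (q₀.concat hycy.symm) with hp
  obtain ⟨q, _, hsub, hbd⟩ := hG.exists_low_walk p.length p le_rfl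
  cases q with
  | nil => exact absurd rfl hxy
  | @cons _ z _ h1 q1 =>
    have hzmem : z ∈ (Walk.cons h1 q1).support := by simp [Walk.support_cons]
    have hz := hsub z hzmem
    rw [hp, Walk.support_cons, List.mem_cons, Walk.support_concat] at hz
    simp only [List.concat_eq_append, List.mem_append, List.mem_singleton] at hz
    rcases hz with rfl | hz | rfl
    · exact absurd rfl h1.ne
    · exfalso
      have hzC : z ∈ C := (hq₀ z hz).1
      have h2 := claim2 x hx z hzC
      have h3 := claim2 y hy z hzC
      rcases hbd z hzmem with h4 | h4
      · exact absurd h4 (not_le.mpr h2)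
      · exact absurd h4 (not_le.mpr h3)
    · exact h1
end

section
/- Let G be a finite simple graph, λ a layering of G, and let r', r, ℓ, m be integers with 0 ≤ r' ≤ r and ℓ > 4r. Let R be an (ℓ, r)-cover of the integers, let p be an m-plan for R, and let (ψ_S) be an r'-local predicate family on G. Suppose that for each I ∈ R there is a set W_I ⊆ λ⁻¹(M_{2r}(I)) with |W_I| = p(I) such that any two distinct vertices of W_I are at distance greater than 2r' in G[λ⁻¹(I)] and ψ_{λ⁻¹(I)}(w) holds for every w ∈ W_I. Then there exists a set W ⊆ V(G) with |W| = m such that any two distinct vertices of W are at distance greater than 2r' in G and ψ_{V(G)}(w) holds for every w ∈ W. -/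
/-- The interval of `l` consecutive integers with left endpoint `i`. -/
def Iv (l : ℕ) (i : ℤ) : Set ℤ := Set.Icc i (i + l - 1)

/-- The middle part `M_d(I)` of the interval of length `l` with left endpoint `i`. -/
def Md (l d : ℕ) (i : ℤ) : Set ℤ := Set.Icc (i + d) (i + l - d - 1)

/-- `i` is a left endpoint of an interval of the `(l, r)`-cover with residue `n`,
i.e. `i ≡ n (mod l − 2r)`. -/
def inCover (l r : ℕ) (n i : ℤ) : Prop := ((l : ℤ) - 2 * r) ∣ (i - n)

/-- An `m`-plan for the `(l, r)`-cover with residue `n`: a finitely supported function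
on intervals (identified with their left endpoints) with values summing to `m`,
supported on the intervals of the cover. -/
def IsPlan (l r : ℕ) (n : ℤ) (m : ℕ) (p : ℤ → ℕ) : Prop :=
  {i | p i ≠ 0}.Finite ∧ (∀ i, p i ≠ 0 → inCover l r n i) ∧ ∑ᶠ i, p i = m

/-- All vertices of `W` are pairwise at distance greater than `2r'` in `G` (vertices in
different components being at infinite distance). -/
def PairwiseFar {V : Type*} (G : SimpleGraph V) (r' : ℕ) (W : Finset V) : Prop :=
  ∀ w ∈ W, ∀ w' ∈ W, w ≠ w' → (G.Reachable w w' → 2 * r' < G.dist w w')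

/-- An `r'`-local predicate family on `G`: a family of predicates `ψ S` (for `S ⊆ V`)
such that whenever `S` contains the ball of radius `r'` around `v`, `ψ S v ↔ ψ univ v`. -/
def IsLocalFamily {V : Type*} (G : SimpleGraph V) (r' : ℕ) (ψ : Set V → V → Prop) : Prop :=
  ∀ (v : V) (S : Set V), {u | G.Reachable v u ∧ G.dist v u ≤ r'} ⊆ S → (ψ S v ↔ ψ Set.univ v)

lemma layering_walk_bound {V : Type*} {G : SimpleGraph V} {lam : V → ℤ}
    (h : IsLayering G lam) {u v : V} (q : G.Walk u v) :
    |lam u - lam v| ≤ (q.length : ℤ) := by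
  induction q with
  | nil => simp
  | @cons a b c ha q ih =>
    calc |lam a - lam c| ≤ |lam a - lam b| + |lam b - lam c| := abs_sub_le _ _ _
      _ ≤ 1 + q.length := add_le_add (h ha) ih
      _ = ((q.cons ha).length : ℤ) := by simp [SimpleGraph.Walk.length_cons]; ring

lemma layering_dist_bound {V : Type*} {G : SimpleGraph V} {lam : V → ℤ}
    (h : IsLayering G lam) {u v : V} (hr : G.Reachable u v) :
    |lam u - lam v| ≤ (G.dist u v : ℤ) := by
  obtain ⟨q, hq⟩ := hr.exists_walk_length_eq_dist
  rw [← hq]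
  exact layering_walk_bound h q

/-- If for each interval `I` of an `(l, r)`-cover there is a set `W_I ⊆ λ⁻¹(M_{2r}(I))`
of `p(I)` vertices, pairwise far apart in `G[λ⁻¹(I)]`, all satisfying `ψ_{λ⁻¹(I)}`,
then there is a set of `m = Σ p(I)` vertices of `G`, pairwise far apart, all
satisfying `ψ_{V(G)}`. -/
theorem stmt_11 {V : Type*} [Fintype V] (G : SimpleGraph V) (lam : V → ℤ)
    (hlam : IsLayering G lam)
    (r' r l m : ℕ) (hr : r' ≤ r) (hl : 4 * r < l)
    (n : ℤ) (p : ℤ → ℕ) (hp : IsPlan l r n m p)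
    (ψ : Set V → V → Prop) (hψ : IsLocalFamily G r' ψ)
    (hW : ∀ i : ℤ, inCover l r n i →
      ∃ W : Finset V, W.card = p i ∧ (∀ w ∈ W, lam w ∈ Md l (2 * r) i) ∧
        PairwiseFar (restrictSet G (lam ⁻¹' Iv l i)) r' W ∧
        ∀ w ∈ W, ψ (lam ⁻¹' Iv l i) w) :
    ∃ W : Finset V, W.card = m ∧ PairwiseFar G r' W ∧ ∀ w ∈ W, ψ Set.univ w := by
  classical
  obtain ⟨hfin, hcov, hsum⟩ := hp
  have hlr : (0:ℤ) < (l:ℤ) - 2*r := by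
    have : (4*r : ℤ) < l := by exact_mod_cast hl
    omega
  have hWf' : ∀ i : ℤ, ∃ W : Finset V, inCover l r n i →
      W.card = p i ∧ (∀ w ∈ W, lam w ∈ Md l (2 * r) i) ∧
        PairwiseFar (restrictSet G (lam ⁻¹' Iv l i)) r' W ∧
        ∀ w ∈ W, ψ (lam ⁻¹' Iv l i) w := by
    intro i
    by_cases h : inCover l r n i
    · obtain ⟨W, hW1⟩ := hW i h; exact ⟨W, fun _ => hW1⟩
    · exact ⟨∅, fun h' => absurd h' h⟩
  choose Wf hWf using hWf'
  set T := hfin.toFinset with hT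
  have hTmem : ∀ i ∈ T, inCover l r n i := by
    intro i hi
    exact hcov i (by simpa [hT] using hi)
  -- middle membership in explicit form
  have hmid : ∀ i, inCover l r n i → ∀ w ∈ Wf i,
      i + 2*r ≤ lam w ∧ lam w ≤ i + l - 2*r - 1 := by
    intro i hi w hw
    have := (hWf i hi).2.1 w hw
    simp only [Md, Set.mem_Icc] at this
    push_cast at this
    omega
  -- gap between distinct cover intervals
  have hgap : ∀ i j : ℤ, inCover l r n i → inCover l r n j → i < j →
      ∀ w ∈ Wf i, ∀ w' ∈ Wf j, (2*r : ℤ) + 1 ≤ lam w' - lam w := by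
    intro i j hi hj hij w hw w' hw'
    have hd : ((l:ℤ) - 2*r) ∣ (j - i) := by
      have := dvd_sub hj hi
      simpa using this
    have hle : (l:ℤ) - 2*r ≤ j - i := Int.le_of_dvd (by omega) hd
    have h1 := hmid i hi w hw
    have h2 := hmid j hj w' hw'
    omega
  -- ball inclusion : vertices within distance 2r' of a vertex of Wf i lie in Iv l i
  have hball : ∀ i, inCover l r n i → ∀ w ∈ Wf i, ∀ x : V,
      G.Reachable w x → G.dist w x ≤ 2 * r' → lam x ∈ Iv l i := by
    intro i hi w hw x hre hdx
    have hb := layering_dist_bound hlam hre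
    have hb' : |lam w - lam x| ≤ (2*r' : ℤ) := by
      refine hb.trans ?_
      exact_mod_cast Nat.cast_le.mpr hdx
    have h1 := hmid i hi w hw
    have habs := abs_le.mp hb'
    have hrr : (r' : ℤ) ≤ r := by exact_mod_cast hr
    simp only [Iv, Set.mem_Icc]
    omega
  refine ⟨T.biUnion Wf, ?_, ?_, ?_⟩
  · -- cardinality
    have hdisj : ∀ i ∈ T, ∀ j ∈ T, i ≠ j → Disjoint (Wf i) (Wf j) := by
      intro i hi j hj hij
      rw [Finset.disjoint_left]
      intro w hwi hwj
      rcases lt_or_gt_of_ne hij with h | h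
      · have := hgap i j (hTmem i hi) (hTmem j hj) h w hwi w hwj; omega
      · have := hgap j i (hTmem j hj) (hTmem i hi) h w hwj w hwi; omega
    rw [Finset.card_biUnion hdisj]
    have : ∀ i ∈ T, (Wf i).card = p i := fun i hi => (hWf i (hTmem i hi)).1
    rw [Finset.sum_congr rfl this]
    rw [← hsum, finsum_eq_sum p hfin]
    exact Finset.sum_congr rfl (fun _ _ => rfl)
  · -- pairwise far
    intro w hw w' hw' hne hre
    simp only [Finset.mem_biUnion] at hw hw'
    obtain ⟨i, hi, hwi⟩ := hw
    obtain ⟨j, hj, hwj⟩ := hw'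
    by_cases hij : i = j
    · subst hij
      by_contra hle
      push_neg at hle
      obtain ⟨q, hq⟩ := hre.exists_walk_length_eq_dist
      have hsupp : ∀ x ∈ q.support, x ∈ lam ⁻¹' Iv l i := by
        intro x hx
        have hq1 := q.takeUntil x hx
        have hlen : (q.takeUntil x hx).length ≤ q.length := q.length_takeUntil_le hx
        have hdx : G.dist w x ≤ 2 * r' := by
          calc G.dist w x ≤ (q.takeUntil x hx).length := SimpleGraph.dist_le _
            _ ≤ q.length := hlen
            _ = G.dist w w' := hq
            _ ≤ 2 * r' := hle
        exact hball i (hTmem i hi) w hwi x ⟨q.takeUntil x hx⟩ hdx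
      have hedges : ∀ e ∈ q.edges, e ∈ (restrictSet G (lam ⁻¹' Iv l i)).edgeSet := by
        intro e he
        induction e with
        | h a b =>
          show (restrictSet G (lam ⁻¹' Iv l i)).Adj a b
          exact ⟨q.adj_of_mem_edges he, hsupp a (q.fst_mem_support_of_mem_edges he),
            hsupp b (q.snd_mem_support_of_mem_edges he)⟩
      set q' := q.transfer _ hedges
      have hfar := (hWf i (hTmem i hi)).2.2.1 w hwi w' hwj hne ⟨q'⟩
      have : (restrictSet G (lam ⁻¹' Iv l i)).dist w w' ≤ 2 * r' := by
        calc _ ≤ q'.length := SimpleGraph.dist_le _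
          _ = q.length := q.length_transfer hedges
          _ = G.dist w w' := hq
          _ ≤ 2 * r' := hle
      omega
    · -- different intervals
      have hb := layering_dist_bound hlam hre
      have habs : (2*r:ℤ) + 1 ≤ |lam w - lam w'| := by
        rcases lt_or_gt_of_ne hij with h | h
        · have := hgap i j (hTmem i hi) (hTmem j hj) h w hwi w' hwj
          rw [abs_sub_comm]
          calc (2*r:ℤ)+1 ≤ lam w' - lam w := this
            _ ≤ |lam w' - lam w| := le_abs_self _
        · have := hgap j i (hTmem j hj) (hTmem i hi) h w' hwj w hwi
          calc (2*r:ℤ)+1 ≤ lam w - lam w' := this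
            _ ≤ |lam w - lam w'| := le_abs_self _
      have hrr : (r' : ℤ) ≤ r := by exact_mod_cast hr
      have : (2*r':ℤ) < G.dist w w' := by omega
      exact_mod_cast this
  · -- predicate
    intro w hw
    simp only [Finset.mem_biUnion] at hw
    obtain ⟨i, hi, hwi⟩ := hw
    have hsub : {u | G.Reachable w u ∧ G.dist w u ≤ r'} ⊆ lam ⁻¹' Iv l i := by
      intro x hx
      exact hball i (hTmem i hi) w hwi x hx.1 (hx.2.trans (by omega))
    exact (hψ w _ hsub).mp ((hWf i (hTmem i hi)).2.2.2 w hwi)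
end

section
/- Let G be a finite simple graph, let r' ≥ 0 and m ≥ 0 be integers, and let (ψ_S) be an r'-local predicate family on G. Suppose there exists a set W₀ ⊆ V(G) with |W₀| = m such that any two distinct vertices of W₀ are at distance greater than 2r' in G and ψ_{V(G)}(w) holds for every w ∈ W₀. Let λ be a layering of G and let r, ℓ be integers with r ≥ r' and ℓ > 2r(3m + 1). Then for all but at most 6rm of the ℓ − 2r distinct (ℓ, r)-covers R of the integers, there exists an m-plan p for R such that for every I ∈ R there is a set W_I ⊆ λ⁻¹(M_{2r}(I)) with |W_I| = p(I), whose vertices are pairwise at distance greater than 2r' in G[λ⁻¹(I)] and satisfy ψ_{λ⁻¹(I)}. -/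
lemma layering_abs_sub_le {V : Type*} {G : SimpleGraph V} {lam : V → ℤ}
    (h : IsLayering G lam) {u v : V} (p : G.Walk u v) :
    |lam u - lam v| ≤ p.length := by
  induction p with
  | nil => simp
  | @cons u w v hadj q ih =>
      have h1 : |lam u - lam w| ≤ 1 := h hadj
      have h2 := abs_sub_le (lam u) (lam w) (lam v)
      simp only [SimpleGraph.Walk.length_cons]
      push_cast
      linarith

/-- If `G` contains `m` vertices pairwise at distance greater than `2r'` all satisfying
`ψ_{V(G)}`, then for all but at most `6rm` of the `l − 2r` distinct `(l, r)`-covers `R`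
(indexed by residues `n ∈ {0, …, l − 2r − 1}`) there is an `m`-plan `p` for `R` such
that each interval `I ∈ R` contains a set `W_I ⊆ λ⁻¹(M_{2r}(I))` of `p(I)` vertices,
pairwise far apart in `G[λ⁻¹(I)]`, all satisfying `ψ_{λ⁻¹(I)}`. -/
theorem stmt_13 {V : Type*} [Fintype V] (G : SimpleGraph V)
    (r' m : ℕ) (ψ : Set V → V → Prop) (hψ : IsLocalFamily G r' ψ)
    (W₀ : Finset V) (hW₀card : W₀.card = m) (hW₀far : PairwiseFar G r' W₀)
    (hW₀ψ : ∀ w ∈ W₀, ψ Set.univ w)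
    (lam : V → ℤ) (hlam : IsLayering G lam)
    (r l : ℕ) (hr : r' ≤ r) (hl : 2 * r * (3 * m + 1) < l) :
    ∃ Bad : Finset ℕ, Bad ⊆ Finset.range (l - 2 * r) ∧ Bad.card ≤ 6 * r * m ∧
      ∀ n ∈ Finset.range (l - 2 * r), n ∉ Bad →
        ∃ p : ℤ → ℕ, IsPlan l r n m p ∧
          ∀ i : ℤ, inCover l r n i →
            ∃ W : Finset V, W.card = p i ∧ (∀ w ∈ W, lam w ∈ Md l (2 * r) i) ∧
              PairwiseFar (restrictSet G (lam ⁻¹' Iv l i)) r' W ∧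
              ∀ w ∈ W, ψ (lam ⁻¹' Iv l i) w := by
  classical
  have h2r : 2 * r < l := by nlinarith
  have hLpos : (0 : ℤ) < (l : ℤ) - 2 * r := by omega
  set a : V → ℤ := fun w => lam w - l + 2 * r + 1 with ha
  set Bad : Finset ℕ := (Finset.range (l - 2 * r)).filter
      (fun n => ∃ w ∈ W₀, ((l : ℤ) - 4 * r) ≤ ((n : ℤ) - a w) % ((l : ℤ) - 2 * r)) with hBadDef
  refine ⟨Bad, Finset.filter_subset _ _, ?_, ?_⟩
  · -- cardinality bound
    have hsub : Bad ⊆ W₀.biUnion (fun w => (Finset.range (l - 2 * r)).filter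
        (fun n : ℕ => ((l : ℤ) - 4 * r) ≤ ((n : ℤ) - a w) % ((l : ℤ) - 2 * r))) := by
      intro n hn
      simp only [hBadDef, Finset.mem_filter, Finset.mem_biUnion] at hn ⊢
      obtain ⟨hn1, w, hw, hw2⟩ := hn
      exact ⟨w, hw, hn1, hw2⟩
    have hcard : ∀ w : V, ((Finset.range (l - 2 * r)).filter
        (fun n : ℕ => ((l : ℤ) - 4 * r) ≤ ((n : ℤ) - a w) % ((l : ℤ) - 2 * r))).card ≤ 2 * r := by
      intro w
      have hmap : ∀ n ∈ (Finset.range (l - 2 * r)).filter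
          (fun n : ℕ => ((l : ℤ) - 4 * r) ≤ ((n : ℤ) - a w) % ((l : ℤ) - 2 * r)),
          ((n : ℤ) - a w) % ((l : ℤ) - 2 * r) ∈ Finset.Ico ((l : ℤ) - 4 * r) ((l : ℤ) - 2 * r) := by
        intro n hn
        rw [Finset.mem_filter] at hn
        exact Finset.mem_Ico.2 ⟨hn.2, Int.emod_lt_of_pos _ hLpos⟩
      have hinj : Set.InjOn (fun n : ℕ => ((n : ℤ) - a w) % ((l : ℤ) - 2 * r))
          ((((Finset.range (l - 2 * r)).filter
          (fun n : ℕ => ((l : ℤ) - 4 * r) ≤ ((n : ℤ) - a w) % ((l : ℤ) - 2 * r))) : Finset ℕ) :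
          Set ℕ) := by
        intro n hn n' hn' heq
        simp only [Finset.coe_filter, Set.mem_setOf_eq, Finset.mem_range] at hn hn'
        have hmodeq : Int.ModEq ((l : ℤ) - 2 * r) ((n : ℤ) - a w) ((n' : ℤ) - a w) := heq
        have hdvd : ((l : ℤ) - 2 * r) ∣ ((n' : ℤ) - a w) - ((n : ℤ) - a w) := hmodeq.dvd
        have h0 : ((n' : ℤ) - a w) - ((n : ℤ) - a w) = 0 := by
          refine Int.eq_zero_of_abs_lt_dvd hdvd ?_
          rw [abs_lt]
          have hn2 : (n : ℤ) < (l : ℤ) - 2 * r := by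
            have := hn.1; omega
          have hn2' : (n' : ℤ) < (l : ℤ) - 2 * r := by
            have := hn'.1; omega
          omega
        have : (n : ℤ) = (n' : ℤ) := by omega
        exact_mod_cast this
      have := Finset.card_le_card_of_injOn (fun n : ℕ => ((n : ℤ) - a w) % ((l : ℤ) - 2 * r)) hmap hinj
      rwa [Int.card_Ico, show (((l : ℤ) - 2 * r) - ((l : ℤ) - 4 * r)).toNat = 2 * r by omega] at this
    calc Bad.card ≤ (W₀.biUnion (fun w => (Finset.range (l - 2 * r)).filter
          (fun n : ℕ => ((l : ℤ) - 4 * r) ≤ ((n : ℤ) - a w) % ((l : ℤ) - 2 * r)))).card :=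
            Finset.card_le_card hsub
      _ ≤ ∑ w ∈ W₀, ((Finset.range (l - 2 * r)).filter
          (fun n : ℕ => ((l : ℤ) - 4 * r) ≤ ((n : ℤ) - a w) % ((l : ℤ) - 2 * r))).card :=
            Finset.card_biUnion_le
      _ ≤ ∑ _w ∈ W₀, 2 * r := Finset.sum_le_sum (fun w _ => hcard w)
      _ = m * (2 * r) := by rw [Finset.sum_const, hW₀card, smul_eq_mul]
      _ ≤ 6 * r * m := by nlinarith
  · -- good residues
    intro n hn hnBad
    have hgood : ∀ w ∈ W₀, ((n : ℤ) - a w) % ((l : ℤ) - 2 * r) < (l : ℤ) - 4 * r := by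
      intro w hw
      by_contra hcon
      push_neg at hcon
      exact hnBad (by rw [hBadDef, Finset.mem_filter]; exact ⟨hn, w, hw, hcon⟩)
    set iw : V → ℤ := fun w => a w + ((n : ℤ) - a w) % ((l : ℤ) - 2 * r) with hiwdef
    have hmod0 : ∀ w : V, 0 ≤ ((n : ℤ) - a w) % ((l : ℤ) - 2 * r) :=
      fun w => Int.emod_nonneg _ hLpos.ne'
    have hcov : ∀ w : V, inCover l r n (iw w) := by
      intro w
      refine ⟨-(((n : ℤ) - a w) / ((l : ℤ) - 2 * r)), ?_⟩
      rw [hiwdef]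
      simp only
      rw [Int.emod_def]
      ring
    have hmem : ∀ w ∈ W₀, lam w ∈ Md l (2 * r) (iw w) := by
      intro w hw
      have h0 := hmod0 w
      have h1 := hgood w hw
      have haw : a w = lam w - l + 2 * r + 1 := rfl
      simp only [Md, Set.mem_Icc, hiwdef]
      push_cast
      constructor <;> omega
    have huniq : ∀ w ∈ W₀, ∀ i : ℤ, inCover l r n i → lam w ∈ Md l (2 * r) i → i = iw w := by
      intro w hw i hic hmd
      obtain ⟨q, hq⟩ := hic
      obtain ⟨q', hq'⟩ := hcov w
      have hdvd : ((l : ℤ) - 2 * r) ∣ (i - iw w) := by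
        refine ⟨q - q', ?_⟩
        rw [mul_sub, ← hq, ← hq']
        ring
      simp only [Md, Set.mem_Icc] at hmd
      have hmem' := hmem w hw
      simp only [Md, Set.mem_Icc] at hmem'
      have habs : |i - iw w| < (l : ℤ) - 2 * r := by
        rw [abs_lt]
        push_cast at hmd hmem' ⊢
        omega
      have := Int.eq_zero_of_abs_lt_dvd hdvd habs
      omega
    set T : Finset ℤ := W₀.image iw with hTdef
    set p : ℤ → ℕ := fun i => if inCover l r n i then
        (W₀.filter (fun w => lam w ∈ Md l (2 * r) i)).card else 0 with hpdef
    have hTcov : ∀ i ∈ T, inCover l r n i := by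
      intro i hi
      obtain ⟨w, _, rfl⟩ := Finset.mem_image.1 hi
      exact hcov w
    have hsupp : ∀ i : ℤ, p i ≠ 0 → i ∈ T := by
      intro i hpi
      by_cases hic : inCover l r n i
      · rw [hpdef] at hpi
        simp only [if_pos hic] at hpi
        obtain ⟨w, hw⟩ := Finset.card_pos.1 (Nat.pos_of_ne_zero hpi)
        rw [Finset.mem_filter] at hw
        rw [huniq w hw.1 i hic hw.2]
        exact Finset.mem_image_of_mem iw hw.1
      · exfalso; apply hpi; rw [hpdef]; simp [hic]
    refine ⟨p, ⟨?_, ?_, ?_⟩, ?_⟩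
    · exact T.finite_toSet.subset (fun i hi => hsupp i hi)
    · intro i hpi
      by_contra hic
      apply hpi
      rw [hpdef]; simp [hic]
    · rw [finsum_eq_sum_of_support_subset p (fun i hi => hsupp i hi)]
      have hstep : ∀ i ∈ T, p i = (W₀.filter (fun w => iw w = i)).card := by
        intro i hi
        rw [hpdef]
        simp only [if_pos (hTcov i hi)]
        congr 1
        apply Finset.filter_congr
        intro w hw
        constructor
        · intro h; exact (huniq w hw i (hTcov i hi) h).symm
        · rintro rfl; exact hmem w hw
      rw [Finset.sum_congr rfl hstep,
        ← Finset.card_eq_sum_card_fiberwise (fun w hw => Finset.mem_image_of_mem iw hw),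
        hW₀card]
    · intro i hic
      refine ⟨W₀.filter (fun w => lam w ∈ Md l (2 * r) i), ?_, ?_, ?_, ?_⟩
      · rw [hpdef]; simp [hic]
      · intro w hw; exact (Finset.mem_filter.1 hw).2
      · intro w hw w' hw' hne hreach
        rw [Finset.mem_filter] at hw hw'
        have hle : restrictSet G (lam ⁻¹' Iv l i) ≤ G := fun u v h => h.1
        have hGr : G.Reachable w w' := hreach.mono hle
        have hdG := hW₀far w hw.1 w' hw'.1 hne hGr
        obtain ⟨q, hq⟩ := hreach.exists_walk_length_eq_dist
        calc 2 * r' < G.dist w w' := hdG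
          _ ≤ (q.mapLe hle).length := G.dist_le _
          _ = q.length := by simp [SimpleGraph.Walk.mapLe]
          _ = _ := hq
      · intro w hw
        rw [Finset.mem_filter] at hw
        refine (hψ w _ ?_).mpr (hW₀ψ w hw.1)
        intro u hu
        obtain ⟨hru, hdu⟩ := hu
        obtain ⟨q, hq⟩ := hru.exists_walk_length_eq_dist
        have habs : |lam w - lam u| ≤ (r' : ℤ) := by
          calc |lam w - lam u| ≤ (q.length : ℤ) := layering_abs_sub_le hlam q
            _ = (G.dist w u : ℤ) := by exact_mod_cast hq
            _ ≤ (r' : ℤ) := by exact_mod_cast hdu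
        have hmd := hw.2
        simp only [Md, Set.mem_Icc] at hmd
        simp only [Set.mem_preimage, Iv, Set.mem_Icc]
        rw [abs_le] at habs
        push_cast at hmd ⊢
        omega
end

section
/- Let G be a finite simple graph, let r' ≥ 0 and m ≥ 0 be integers, and let (ψ_S) be an r'-local predicate family on G. Suppose there is no set of m + 1 vertices of G, pairwise at distance greater than 2r' in G, at each of which ψ_{V(G)} fails. Let λ be a layering of G and let r, ℓ be integers with r ≥ r' and ℓ > 2r(3m + 1). Then for all but at most 6rm of the ℓ − 2r distinct (ℓ, r)-covers R of the integers, there exists an m-plan p for R such that for every I ∈ R there is no set of p(I) + 1 vertices of λ⁻¹(M_r(I)), pairwise at distance greater than 2r' in G[λ⁻¹(I)], at each of which ψ_{λ⁻¹(I)} fails. -/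
lemma walk_lam_bound {V : Type*} {G : SimpleGraph V} {lam : V → ℤ}
    (hlam : IsLayering G lam) : ∀ {u v : V} (q : G.Walk u v),
    |lam u - lam v| ≤ q.length := by
  intro u v q
  induction q with
  | nil => simp
  | @cons a b c h q ih =>
    have h1 := hlam h
    have := abs_sub_le (lam a) (lam b) (lam c)
    rw [SimpleGraph.Walk.length_cons]
    push_cast
    linarith

lemma dist_lam_bound {V : Type*} {G : SimpleGraph V} {lam : V → ℤ}
    (hlam : IsLayering G lam) {u v : V} (h : G.Reachable u v) :
    |lam u - lam v| ≤ (G.dist u v : ℤ) := by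
  obtain ⟨q, hq⟩ := h.exists_walk_length_eq_dist
  simpa [hq] using walk_lam_bound hlam q

lemma walk_restrict {V : Type*} {G : SimpleGraph V} {U : Set V} :
    ∀ {u v : V} (q : G.Walk u v), (∀ x ∈ q.support, x ∈ U) →
    ∃ q' : (restrictSet G U).Walk u v, q'.length = q.length := by
  intro u v q
  induction q with
  | nil => exact fun _ => ⟨.nil, rfl⟩
  | @cons a b c h q ih =>
    intro hs
    obtain ⟨q', hq'⟩ := ih (fun x hx => hs x (by simp [hx]))
    refine ⟨.cons (show G.Adj a b ∧ a ∈ U ∧ b ∈ U from ⟨h, hs a (SimpleGraph.Walk.cons h q).start_mem_support, hs b (List.mem_cons_of_mem a q.start_mem_support : b ∈ (SimpleGraph.Walk.cons h q).support)⟩) q', by exact congrArg (· + 1) hq'⟩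

lemma walk_split {V : Type*} [DecidableEq V] {G : SimpleGraph V} {w w' : V} (q : G.Walk w w') {u : V}
    (hu : u ∈ q.support) :
    ∃ (q1 : G.Walk w u) (q2 : G.Walk u w'), q1.length + q2.length = q.length :=
  ⟨q.takeUntil u hu, q.dropUntil u hu, by
    conv_rhs => rw [← q.take_spec hu]
    rw [SimpleGraph.Walk.length_append]⟩

/-- If `G` contains no `m + 1` vertices pairwise at distance greater than `2r'` at each
of which `ψ_{V(G)}` fails, then for all but at most `6rm` of the `l − 2r` distinct
`(l, r)`-covers `R` (indexed by residues `n ∈ {0, …, l − 2r − 1}`) there is an `m`-plan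
`p` for `R` such that for every interval `I ∈ R` there is no set of `p(I) + 1` vertices
of `λ⁻¹(M_r(I))`, pairwise far apart in `G[λ⁻¹(I)]`, at each of which `ψ_{λ⁻¹(I)}`
fails. -/
theorem stmt_14 {V : Type*} [Fintype V] (G : SimpleGraph V)
    (r' m : ℕ) (ψ : Set V → V → Prop) (hψ : IsLocalFamily G r' ψ)
    (hno : ¬ ∃ W : Finset V, W.card = m + 1 ∧ PairwiseFar G r' W ∧
        ∀ w ∈ W, ¬ ψ Set.univ w)
    (lam : V → ℤ) (hlam : IsLayering G lam)
    (r l : ℕ) (hr : r' ≤ r) (hl : 2 * r * (3 * m + 1) < l) :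
    ∃ Bad : Finset ℕ, Bad ⊆ Finset.range (l - 2 * r) ∧ Bad.card ≤ 6 * r * m ∧
      ∀ n ∈ Finset.range (l - 2 * r), n ∉ Bad →
        ∃ p : ℤ → ℕ, IsPlan l r n m p ∧
          ∀ i : ℤ, inCover l r n i →
            ¬ ∃ W : Finset V, W.card = p i + 1 ∧ (∀ w ∈ W, lam w ∈ Md l r i) ∧
                PairwiseFar (restrictSet G (lam ⁻¹' Iv l i)) r' W ∧
                ∀ w ∈ W, ¬ ψ (lam ⁻¹' Iv l i) w := by
  classical
  set L : ℤ := (l : ℤ) - 2 * r with hLdef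
  have hrl : 2 * r ≤ l := by nlinarith
  have hL : 0 < L := by
    have : ((2 * r * (3 * m + 1) : ℕ) : ℤ) < (l : ℤ) := by exact_mod_cast hl
    push_cast at this; nlinarith
  -- choose a maximum pairwise-far failing set
  set S : Finset (Finset V) :=
    Finset.univ.filter (fun W => PairwiseFar G r' W ∧ ∀ w ∈ W, ¬ ψ Set.univ w) with hSdef
  have hSne : S.Nonempty := ⟨∅, by rw [hSdef, Finset.mem_filter]; simp [PairwiseFar]⟩
  obtain ⟨W₀, hW₀S, hW₀max⟩ := S.exists_max_image Finset.card hSne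
  have hW₀far : PairwiseFar G r' W₀ := ((Finset.mem_filter.mp hW₀S).2).1
  have hW₀fail : ∀ w ∈ W₀, ¬ ψ Set.univ w := ((Finset.mem_filter.mp hW₀S).2).2
  set k := W₀.card with hkdef
  have hk : k ≤ m := by
    by_contra h
    push_neg at h
    obtain ⟨Wc, hsub, hcard⟩ := Finset.exists_subset_card_eq (show m + 1 ≤ W₀.card by omega)
    exact hno ⟨Wc, hcard, fun a ha b hb hab => hW₀far a (hsub ha) b (hsub hb) hab,
      fun w hw => hW₀fail w (hsub hw)⟩
  -- the bad set
  set Bad : Finset ℕ := (Finset.range (l - 2 * r)).filter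
    (fun n : ℕ => ∃ v ∈ W₀, (lam v - r - n) % L < 2 * r ∨ L - 2 * r ≤ (lam v - r - n) % L) with hBdef
  refine ⟨Bad, Finset.filter_subset _ _, ?_, ?_⟩
  · -- cardinality bound
    have hBsub : Bad ⊆ W₀.biUnion (fun v => (Finset.range (l - 2 * r)).filter
        (fun n : ℕ => (lam v - r - n) % L < 2 * r ∨ L - 2 * r ≤ (lam v - r - n) % L)) := by
      intro n hn
      rw [hBdef, Finset.mem_filter] at hn
      obtain ⟨hn1, v, hv, hc⟩ := hn
      exact Finset.mem_biUnion.mpr ⟨v, hv, Finset.mem_filter.mpr ⟨hn1, hc⟩⟩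
    have hBv : ∀ v : V, ((Finset.range (l - 2 * r)).filter
        (fun n : ℕ => (lam v - r - n) % L < 2 * r ∨ L - 2 * r ≤ (lam v - r - n) % L)).card ≤ 4 * r := by
      intro v
      have hmap := Finset.card_le_card_of_injOn (f := fun n : ℕ => (lam v - r - n) % L)
        (s := (Finset.range (l - 2 * r)).filter
          (fun n : ℕ => (lam v - r - n) % L < 2 * r ∨ L - 2 * r ≤ (lam v - r - n) % L))
        (t := Finset.Ico (0 : ℤ) (2 * r) ∪ Finset.Ico (L - 2 * r) L) ?_ ?_
      · refine hmap.trans ((Finset.card_union_le _ _).trans ?_)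
        rw [Int.card_Ico, Int.card_Ico]
        omega
      · intro n hn
        rw [Finset.mem_coe, Finset.mem_filter] at hn
        have h0 : 0 ≤ (lam v - r - n) % L := Int.emod_nonneg _ hL.ne'
        have h1 : (lam v - r - n) % L < L := Int.emod_lt_of_pos _ hL
        simp only [Finset.mem_coe, Finset.mem_union, Finset.mem_Ico]
        omega
      · intro n₁ h₁ n₂ h₂ heq
        simp only [Finset.coe_filter, Set.mem_setOf_eq, Finset.mem_range] at h₁ h₂
        have hdvd : L ∣ (n₁ : ℤ) - n₂ := by
          have hmod : (lam v - r - n₁) % L = (lam v - r - n₂) % L := heq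
          have h3 := Int.ModEq.dvd (hmod : Int.ModEq L _ _)
          have h4 : (lam v - ↑r - ↑n₂) - (lam v - ↑r - ↑n₁) = (n₁ : ℤ) - n₂ := by ring
          rwa [h4] at h3
        have h5 := Int.eq_zero_of_abs_lt_dvd hdvd (by rw [abs_lt]; omega)
        omega
    calc Bad.card ≤ _ := Finset.card_le_card hBsub
      _ ≤ ∑ v ∈ W₀, _ := Finset.card_biUnion_le
      _ ≤ ∑ _v ∈ W₀, 4 * r := Finset.sum_le_sum (fun v _ => hBv v)
      _ = k * (4 * r) := by rw [Finset.sum_const, smul_eq_mul]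
      _ ≤ 6 * r * m := by nlinarith
  · intro n hn hnB
    have hgood : ∀ v ∈ W₀, 2 * (r : ℤ) ≤ (lam v - r - n) % L ∧ (lam v - r - n) % L < L - 2 * r := by
      intro v hv
      rw [hBdef, Finset.mem_filter] at hnB
      push_neg at hnB
      have := hnB hn v hv
      omega
    set iv : V → ℤ := fun v => lam v - r - ((lam v - r - (n : ℤ)) % L) with hivdef
    have hiv_eq : ∀ v : V, iv v = lam v - r - ((lam v - r - (n : ℤ)) % L) := fun v => rfl
    have hiv_cov : ∀ v : V, inCover l r n (iv v) := by
      intro v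
      have h1 := Int.emod_def (lam v - r - (n : ℤ)) L
      exact ⟨(lam v - r - (n : ℤ)) / L, by rw [hiv_eq, ← hLdef]; omega⟩
    have hMd : ∀ (i x : ℤ), x ∈ Md l r i ↔ (i + r ≤ x ∧ x ≤ i + l - r - 1) := fun i x => Set.mem_Icc
    have hMddisj : ∀ i₁ i₂ x : ℤ, inCover l r n i₁ → inCover l r n i₂ →
        x ∈ Md l r i₁ → x ∈ Md l r i₂ → i₁ = i₂ := by
      intro i₁ i₂ x h₁ h₂ hx₁ hx₂
      rw [hMd] at hx₁ hx₂
      have hdvd : L ∣ i₁ - i₂ := by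
        rw [hLdef]
        simpa [sub_sub_sub_cancel_right] using dvd_sub h₁ h₂
      have h5 := Int.eq_zero_of_abs_lt_dvd hdvd (by rw [abs_lt]; omega)
      omega
    have hMdiv : ∀ v ∈ W₀, lam v ∈ Md l r (iv v) := by
      intro v hv
      rw [hMd, hiv_eq]
      have h0 : 0 ≤ (lam v - r - n) % L := Int.emod_nonneg _ hL.ne'
      have h1 : (lam v - r - n) % L < L := Int.emod_lt_of_pos _ hL
      omega
    set p : ℤ → ℕ := fun i => (W₀.filter (fun v => iv v = i)).card +
      (if i = (n : ℤ) then m - k else 0) with hpdef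
    have hsupp : ∀ i : ℤ, p i ≠ 0 → i ∈ insert (n : ℤ) (W₀.image iv) := by
      intro i hi
      by_cases hin : i = (n : ℤ)
      · simp [hin]
      · rw [hpdef] at hi
        simp only [hin, if_false, add_zero] at hi
        obtain ⟨v, hv⟩ := Finset.card_pos.mp (Nat.pos_of_ne_zero hi)
        rw [Finset.mem_filter] at hv
        exact Finset.mem_insert_of_mem (Finset.mem_image.mpr ⟨v, hv.1, hv.2⟩)
    refine ⟨p, ⟨?_, ?_, ?_⟩, ?_⟩
    · exact Set.Finite.subset (Finset.finite_toSet (insert (n : ℤ) (W₀.image iv)))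
        (fun i hi => hsupp i hi)
    · intro i hi
      by_cases hin : i = (n : ℤ)
      · subst hin; exact ⟨0, by ring⟩
      · rw [hpdef] at hi
        simp only [hin, if_false, add_zero] at hi
        obtain ⟨v, hv⟩ := Finset.card_pos.mp (Nat.pos_of_ne_zero hi)
        rw [Finset.mem_filter] at hv
        rw [← hv.2]
        exact hiv_cov v
    · rw [finsum_eq_sum_of_support_subset p (fun i hi => hsupp i hi)]
      rw [hpdef]
      rw [Finset.sum_add_distrib]
      have h1 : ∑ i ∈ insert (n : ℤ) (W₀.image iv), (W₀.filter (fun v => iv v = i)).card = k :=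
        (Finset.card_eq_sum_card_fiberwise
          (fun v hv => Finset.mem_insert_of_mem (Finset.mem_image_of_mem iv hv))).symm
      have h2 : ∑ i ∈ insert (n : ℤ) (W₀.image iv), (if i = (n : ℤ) then m - k else 0) = m - k := by
        rw [Finset.sum_ite_eq' _ _ (fun _ => m - k)]
        simp
      rw [h1, h2]
      omega
    · intro i hiC
      rintro ⟨W, hWcard, hWmid, hWfar, hWfail⟩
      have hball : ∀ w ∈ W, {u | G.Reachable w u ∧ G.dist w u ≤ r'} ⊆ lam ⁻¹' Iv l i := by
        intro w hw u hu
        obtain ⟨hru, hdu⟩ := hu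
        have hb := dist_lam_bound hlam hru
        rw [abs_le] at hb
        have hmw := (hMd i (lam w)).mp (hWmid w hw)
        simp only [Set.mem_preimage, Iv, Set.mem_Icc]
        have hdc : (G.dist w u : ℤ) ≤ r' := by exact_mod_cast hdu
        omega
      have hfailuniv : ∀ w ∈ W, ¬ ψ Set.univ w := by
        intro w hw
        rw [← hψ w _ (hball w hw)]
        exact hWfail w hw
      have hWfarG : ∀ w ∈ W, ∀ w' ∈ W, w ≠ w' → G.Reachable w w' → 2 * r' < G.dist w w' := by
        intro w hw w' hw' hne hreach
        by_contra hle
        push_neg at hle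
        obtain ⟨q, hq⟩ := hreach.exists_walk_length_eq_dist
        have hsup : ∀ x ∈ q.support, x ∈ lam ⁻¹' Iv l i := by
          intro x hx
          obtain ⟨q1, q2, hlen⟩ := walk_split q hx
          have h1 := walk_lam_bound hlam q1
          have h2 := walk_lam_bound hlam q2
          rw [abs_le] at h1 h2
          have hmw := (hMd i (lam w)).mp (hWmid w hw)
          have hmw' := (hMd i (lam w')).mp (hWmid w' hw')
          simp only [Set.mem_preimage, Iv, Set.mem_Icc]
          omega
        obtain ⟨q', hq'⟩ := walk_restrict q hsup
        have h3 := hWfar w hw w' hw' hne ⟨q'⟩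
        have h4 := SimpleGraph.dist_le q'
        omega
      have hnotMd : ∀ v ∈ W₀, iv v ≠ i → lam v ∉ Md l r i := by
        intro v hv hne hmem
        exact hne (hMddisj (iv v) i (lam v) (hiv_cov v) hiC (hMdiv v hv) hmem)
      have hcross : ∀ v ∈ W₀, iv v ≠ i → ∀ w ∈ W, G.Reachable v w → 2 * r' < G.dist v w := by
        intro v hv hne w hw hreach
        by_contra hle
        push_neg at hle
        have hb := dist_lam_bound hlam hreach
        rw [abs_le] at hb
        have hdle : (G.dist v w : ℤ) ≤ 2 * r' := by exact_mod_cast hle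
        have hgv := hgood v hv
        have hmw := (hMd i (lam w)).mp (hWmid w hw)
        have hwMd : lam w ∈ Md l r (iv v) := by
          rw [hMd, hiv_eq]
          omega
        exact hne (hMddisj (iv v) i (lam w) (hiv_cov v) hiC hwMd (hWmid w hw))
      set F := W₀.filter (fun v => ¬ (iv v = i)) with hFdef
      have hdisjFW : ∀ v ∈ F, v ∉ W := by
        intro v hv hvW
        rw [hFdef, Finset.mem_filter] at hv
        exact hnotMd v hv.1 hv.2 (hWmid v hvW)
      have hW₁far : PairwiseFar G r' (F ∪ W) := by
        intro a ha b hb hab hreach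
        rw [Finset.mem_union] at ha hb
        rcases ha with ha | ha <;> rcases hb with hb | hb
        · rw [hFdef, Finset.mem_filter] at ha hb
          exact hW₀far a ha.1 b hb.1 hab hreach
        · rw [hFdef, Finset.mem_filter] at ha
          exact hcross a ha.1 ha.2 b hb hreach
        · rw [hFdef, Finset.mem_filter] at hb
          have := hcross b hb.1 hb.2 a ha hreach.symm
          rwa [SimpleGraph.dist_comm] at this
        · exact hWfarG a ha b hb hab hreach
      have hW₁fail : ∀ w ∈ F ∪ W, ¬ ψ Set.univ w := by
        intro w hw
        rw [Finset.mem_union] at hw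
        rcases hw with hw | hw
        · rw [hFdef, Finset.mem_filter] at hw
          exact hW₀fail w hw.1
        · exact hfailuniv w hw
      have hW₁S : F ∪ W ∈ S := by
        rw [hSdef, Finset.mem_filter]
        exact ⟨Finset.mem_univ _, hW₁far, hW₁fail⟩
      have hle := hW₀max _ hW₁S
      have hcardU : (F ∪ W).card = F.card + W.card :=
        Finset.card_union_of_disjoint (Finset.disjoint_left.mpr (fun {v} hv => hdisjFW v hv))
      have hsplit : (W₀.filter (fun v => iv v = i)).card + F.card = k := by
        rw [hFdef]
        exact Finset.card_filter_add_card_filter_not (p := fun v => iv v = i)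
      have hpge : (W₀.filter (fun v => iv v = i)).card ≤ p i := by
        rw [hpdef]
        exact Nat.le_add_right _ _
      omega
end
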